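/- arXiv:1403.3882 — 5 statements merged into one kernel-verified Lean document; each statement's English description precedes it below -/
import Mathlib

section
/- If f is C² on a compact convex set X ⊆ ℝⁿ, then for every ε > 0 there exist finitely many concave functions p₁,…,p_m : ℝⁿ → ℝ such that max_{x∈X} |f(x) − maxᵢ pᵢ(x)| ≤ ε. -/
/-- A downward cone function `x ↦ c - K * ‖x - y‖` is concave. -/
lemma cone_concave {E : Type*} [NormedAddCommGroup E] [NormedSpace ℝ E]
    (y : E) (c K : ℝ) (hK : 0 ≤ K) :
    ConcaveOn ℝ Set.univ (fun x : E => c - K * ‖x - y‖) := by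
  refine ⟨convex_univ, ?_⟩
  intro x _ z _ a b ha hb hab
  have hy : a • y + b • y = y := by rw [← add_smul, hab, one_smul]
  have hrw : a • x + b • z - y = a • (x - y) + b • (z - y) := by
    nth_rewrite 1 [← hy]
    rw [smul_sub, smul_sub]; abel
  have hnorm : ‖a • x + b • z - y‖ ≤ a * ‖x - y‖ + b * ‖z - y‖ := by
    rw [hrw]
    calc ‖a • (x - y) + b • (z - y)‖ ≤ ‖a • (x - y)‖ + ‖b • (z - y)‖ := norm_add_le _ _
      _ = a * ‖x - y‖ + b * ‖z - y‖ := by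
          rw [norm_smul, norm_smul, Real.norm_eq_abs, Real.norm_eq_abs,
            abs_of_nonneg ha, abs_of_nonneg hb]
  simp only [smul_eq_mul]
  have hc : a * c + b * c = c := by rw [← add_mul, hab, one_mul]
  linarith [mul_le_mul_of_nonneg_left hnorm hK]

/-- Piecewise-concave approximation of C² functions: if `f` is C² on a neighborhood of a
compact convex set `X ⊆ ℝⁿ`, then for every `ε > 0` there are finitely many concave
functions whose pointwise maximum approximates `f` within `ε` on `X`. -/
theorem stmt_2 (n : ℕ) (X U : Set (EuclideanSpace ℝ (Fin n)))
    (hXc : IsCompact X) (hXconv : Convex ℝ X)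
    (f : EuclideanSpace ℝ (Fin n) → ℝ)
    (hU : IsOpen U) (hXU : X ⊆ U) (hf : ContDiffOn ℝ 2 f U)
    (ε : ℝ) (hε : 0 < ε) :
    ∃ (m : ℕ) (p : Fin (m + 1) → EuclideanSpace ℝ (Fin n) → ℝ),
      (∀ i, ConcaveOn ℝ Set.univ (p i)) ∧
      ∀ x ∈ X, |f x - Finset.univ.sup' Finset.univ_nonempty (fun i => p i x)| ≤ ε := by
  rcases X.eq_empty_or_nonempty with hXe | hXne
  · exact ⟨0, fun _ _ => 0, fun _ => concaveOn_const 0 convex_univ,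
      fun x hx => by simp [hXe] at hx⟩
  -- differentiability and a Lipschitz-type bound on X
  have hdiff : ∀ x ∈ X, DifferentiableAt ℝ f x := fun x hx =>
    (hf.contDiffAt (hU.mem_nhds (hXU hx))).differentiableAt (by norm_num)
  have hcontd : ContinuousOn (fun x => ‖fderiv ℝ f x‖) X :=
    ((hf.continuousOn_fderiv_of_isOpen hU (by norm_num)).mono hXU).norm
  obtain ⟨C, hC⟩ := hXc.exists_bound_of_continuousOn hcontd
  set K : ℝ := max C 0 + 1 with hKdef
  have hK0 : 0 < K := by positivity
  have hbound : ∀ x ∈ X, ‖fderiv ℝ f x‖ ≤ K := fun x hx => by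
    have := hC x hx
    simp only [Real.norm_eq_abs, abs_abs] at this ⊢
    have h2 : ‖fderiv ℝ f x‖ ≤ C := by
      calc ‖fderiv ℝ f x‖ = ‖‖fderiv ℝ f x‖‖ := (norm_norm _).symm
        _ ≤ C := this
    calc ‖fderiv ℝ f x‖ ≤ C := h2
      _ ≤ max C 0 := le_max_left _ _
      _ ≤ K := by rw [hKdef]; linarith
  have hLip : ∀ x ∈ X, ∀ y ∈ X, f y - f x ≤ K * ‖y - x‖ := by
    intro x hx y hy
    have := hXconv.norm_image_sub_le_of_norm_fderiv_le hdiff hbound hx hy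
    calc f y - f x ≤ |f y - f x| := le_abs_self _
      _ = ‖f y - f x‖ := (Real.norm_eq_abs _).symm
      _ ≤ K * ‖y - x‖ := this
  -- a δ-net of X
  set δ : ℝ := ε / (2 * K) with hδdef
  have hδ : 0 < δ := by positivity
  obtain ⟨t, htX, htfin, hcov⟩ :=
    Metric.finite_approx_of_totallyBounded hXc.totallyBounded δ hδ
  -- the list of net points
  set l := htfin.toFinset.toList with hl
  have hlne : l ≠ [] := by
    obtain ⟨x0, hx0⟩ := hXne
    obtain ⟨z, hz, _⟩ := Set.mem_iUnion₂.1 (hcov hx0)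
    intro h
    have : z ∈ htfin.toFinset := htfin.mem_toFinset.2 hz
    rw [← Finset.mem_toList, ← hl, h] at this
    simp at this
  have hlpos : 0 < l.length := List.length_pos_iff.2 hlne
  have hlen : l.length - 1 + 1 = l.length := Nat.succ_pred_eq_of_pos hlpos
  refine ⟨l.length - 1,
    fun i x => f (l.get (Fin.cast hlen i)) - K * ‖x - l.get (Fin.cast hlen i)‖,
    fun i => cone_concave _ _ _ hK0.le, ?_⟩
  intro x hx
  have hmemX : ∀ k : Fin l.length, l.get k ∈ X := fun k =>
    htX (htfin.mem_toFinset.1 (Finset.mem_toList.1 (by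
      exact l.get_mem k)))
  -- upper bound : every piece is ≤ f x
  have hub : ∀ i : Fin (l.length - 1 + 1),
      f (l.get (Fin.cast hlen i)) - K * ‖x - l.get (Fin.cast hlen i)‖ ≤ f x := by
    intro i
    set y := l.get (Fin.cast hlen i) with hy
    have hyX : y ∈ X := hmemX _
    have h1 := hLip x hx y hyX
    have hsym : ‖y - x‖ = ‖x - y‖ := norm_sub_rev _ _
    rw [hsym] at h1
    linarith
  -- lower bound : some piece is ≥ f x - ε
  obtain ⟨z, hz, hxz⟩ := Set.mem_iUnion₂.1 (hcov hx)
  have hzmem : z ∈ l := Finset.mem_toList.2 (htfin.mem_toFinset.2 hz)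
  obtain ⟨k, hk⟩ := List.mem_iff_get.1 hzmem
  set j : Fin (l.length - 1 + 1) := Fin.cast hlen.symm k with hj
  have hjk : (Fin.cast hlen j) = k := by rw [hj]; ext; simp
  have hdist : ‖x - z‖ < δ := by
    rw [← dist_eq_norm]; exact Metric.mem_ball.1 hxz
  have hzX : z ∈ X := htX hz
  have hlb : f x - ε ≤ f z - K * ‖x - z‖ := by
    have h1 : f x - f z ≤ K * ‖x - z‖ := hLip z hzX x hx
    have h2 : K * ‖x - z‖ ≤ K * δ := mul_le_mul_of_nonneg_left hdist.le hK0.le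
    have h3 : 2 * (K * δ) = ε := by
      rw [hδdef]; field_simp
    nlinarith
  set S := Finset.univ.sup' Finset.univ_nonempty
    (fun i : Fin (l.length - 1 + 1) =>
      f (l.get (Fin.cast hlen i)) - K * ‖x - l.get (Fin.cast hlen i)‖) with hS
  have hSle : S ≤ f x := Finset.sup'_le _ _ fun i _ => hub i
  have hSge : f x - ε ≤ S := by
    have hle : f z - K * ‖x - z‖ ≤ S := by
      have h4 := Finset.le_sup' (f := fun i : Fin (l.length - 1 + 1) =>
        f (l.get (Fin.cast hlen i)) - K * ‖x - l.get (Fin.cast hlen i)‖)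
        (Finset.mem_univ j)
      rw [hjk, hk] at h4
      exact h4
    linarith
  rw [abs_le]
  constructor <;> linarith
end

section
/- Let f : ℝ → ℝ be Lipschitz with constant κ (strictly: |f(x)−f(y)| < κ|x−y| for x ≠ y) on [a,b], let [c, c+Δ] ⊆ [a,b], and let q be the quadratic with q(c + Δ/2) = f(c + Δ/2), q'(c) = 2κ, q'(c+Δ) = −2κ. Then q(x) < f(x) for all x ∈ [a,b] \ (c, c+Δ). -/
/-- If `f` is strictly `κ`-Lipschitz on `[a,b]`, `[c, c+Δ] ⊆ [a,b]`, and `q` is the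
quadratic with `q(c + Δ/2) = f(c + Δ/2)`, `q'(c) = 2κ`, `q'(c+Δ) = -2κ`, then
`q(x) < f(x)` for all `x ∈ [a,b] \ (c, c+Δ)`. -/
theorem stmt_6 (f : ℝ → ℝ) (a b κ c Δ : ℝ) (hκ : 0 < κ) (hΔ : 0 < Δ)
    (hab : Set.Icc c (c + Δ) ⊆ Set.Icc a b)
    (hlip : ∀ x ∈ Set.Icc a b, ∀ y ∈ Set.Icc a b, x ≠ y → |f x - f y| < κ * |x - y|)
    (q : ℝ → ℝ) (β₁ β₀ : ℝ)
    (hq : ∀ x, q x = -(2 * κ / Δ) * x ^ 2 + β₁ * x + β₀)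
    (hmid : q (c + Δ / 2) = f (c + Δ / 2))
    (hd1 : deriv q c = 2 * κ) (hd2 : deriv q (c + Δ) = -(2 * κ)) :
    ∀ x ∈ Set.Icc a b, x ∉ Set.Ioo c (c + Δ) → q x < f x := by
  intro x hx hxo
  have hΔ' : Δ ≠ 0 := ne_of_gt hΔ
  set m := c + Δ / 2 with hm
  have hderiv : deriv q c = -(2 * κ / Δ) * (2 * c) + β₁ := by
    have hqfun : q = fun x => -(2 * κ / Δ) * x ^ 2 + β₁ * x + β₀ := funext hq
    have H : HasDerivAt (fun x : ℝ => -(2 * κ / Δ) * x ^ 2 + β₁ * x + β₀)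
        (-(2 * κ / Δ) * (2 * c) + β₁) c := by
      have h1 := ((hasDerivAt_pow 2 c).const_mul (-(2 * κ / Δ))).add
        ((hasDerivAt_id c).const_mul β₁)
      have h2 := h1.add_const β₀
      exact h2.congr_deriv (by norm_num)
    rw [hqfun, H.deriv]
  have hβ₁ : β₁ = 2 * κ + 4 * κ * c / Δ := by
    rw [hd1] at hderiv
    field_simp at hderiv ⊢
    linarith
  have hqx : q x = q m - (2 * κ / Δ) * (x - m) ^ 2 := by
    rw [hq x, hq m, hβ₁, hm]
    field_simp
    ring
  have hmem : m ∈ Set.Icc a b := by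
    apply hab
    constructor <;> [simp [hm]; simp [hm]] <;> linarith
  have h' : x ≤ c ∨ c + Δ ≤ x := by
    by_contra h
    push_neg at h
    exact hxo ⟨h.1, h.2⟩
  have hdist : Δ / 2 ≤ |x - m| := by
    rcases h' with h | h
    · rw [abs_of_nonpos (by simp [hm]; linarith)]
      simp [hm]; linarith
    · rw [abs_of_nonneg (by simp [hm]; linarith)]
      simp [hm]; linarith
  have hne : x ≠ m := by
    intro h
    rw [h] at hdist
    simp at hdist
    linarith
  have hlt : f m - f x < κ * |x - m| := by
    have h2 := hlip m hmem x hx (fun h => hne h.symm)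
    calc f m - f x ≤ |f m - f x| := le_abs_self _
      _ < κ * |m - x| := h2
      _ = κ * |x - m| := by rw [abs_sub_comm]
  have hkey : κ * |x - m| ≤ (2 * κ / Δ) * (x - m) ^ 2 := by
    have h1 : (x - m) ^ 2 = |x - m| ^ 2 := (sq_abs _).symm
    have h3 : κ * |x - m| = (2 * κ / Δ) * (Δ / 2 * |x - m|) := by
      field_simp
    rw [h1, h3, sq]
    exact mul_le_mul_of_nonneg_left
      (mul_le_mul_of_nonneg_right hdist (abs_nonneg _)) (by positivity)
  rw [hqx, hmid]
  linarith
end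

section
/- Let f be strictly κ-Lipschitz on [a,b] and let q₁, q₂ be the concave quadratics constructed on adjacent subintervals [c−Δ, c] and [c, c+Δ] as in the midpoint-interpolation scheme. Then q₁(x) > q₂(x) for all x ∈ [a, c − Δ/2], and q₂(x) > q₁(x) for all x ∈ [c + Δ/2, b]. -/
lemma derivQuad (A B D t : ℝ) : deriv (fun x => A * x ^ 2 + B * x + D) t = 2 * A * t + B := by
  have h : HasDerivAt (fun x => A * x ^ 2 + B * x + D) (2 * A * t + B) t := by
    have := (((hasDerivAt_pow 2 t).const_mul A).add ((hasDerivAt_id t).const_mul B)).add_const D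
    simpa [mul_comm, mul_assoc, mul_left_comm] using this
  exact h.deriv

/-- For `f` strictly `κ`-Lipschitz on `[a,b]` and `q₁, q₂` the concave quadratics built on
adjacent subintervals `[c-Δ, c]` and `[c, c+Δ]`, we have `q₁ > q₂` on `[a, c - Δ/2]`
and `q₂ > q₁` on `[c + Δ/2, b]`. -/
theorem stmt_9 (f : ℝ → ℝ) (a b κ Δ c : ℝ) (hκ : 0 < κ) (hΔ : 0 < Δ)
    (hsub : Set.Icc (c - Δ) (c + Δ) ⊆ Set.Icc a b)
    (hlip : ∀ x ∈ Set.Icc a b, ∀ y ∈ Set.Icc a b, x ≠ y → |f x - f y| < κ * |x - y|)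
    (q₁ q₂ : ℝ → ℝ) (b₁ d₁ b₂ d₂ : ℝ)
    (hq₁ : ∀ x, q₁ x = -(2 * κ / Δ) * x ^ 2 + b₁ * x + d₁)
    (hq₂ : ∀ x, q₂ x = -(2 * κ / Δ) * x ^ 2 + b₂ * x + d₂)
    (hmid₁ : q₁ (c - Δ / 2) = f (c - Δ / 2))
    (hd₁l : deriv q₁ (c - Δ) = 2 * κ) (hd₁r : deriv q₁ c = -(2 * κ))
    (hmid₂ : q₂ (c + Δ / 2) = f (c + Δ / 2))
    (hd₂l : deriv q₂ c = 2 * κ) (hd₂r : deriv q₂ (c + Δ) = -(2 * κ)) :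
    (∀ x ∈ Set.Icc a (c - Δ / 2), q₂ x < q₁ x) ∧
    (∀ x ∈ Set.Icc (c + Δ / 2) b, q₁ x < q₂ x) := by
  set A : ℝ := -(2 * κ / Δ) with hA
  have hAΔ : A * Δ = -(2 * κ) := by
    rw [hA, neg_mul, div_mul_cancel₀ _ hΔ.ne']
  clear_value A
  have hq₁' : q₁ = fun x => A * x ^ 2 + b₁ * x + d₁ := funext hq₁
  have hq₂' : q₂ = fun x => A * x ^ 2 + b₂ * x + d₂ := funext hq₂
  have hb₁ : 2 * A * (c - Δ) + b₁ = 2 * κ := by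
    rw [← derivQuad A b₁ d₁ (c - Δ), ← hq₁']; exact hd₁l
  have hb₂ : 2 * A * c + b₂ = 2 * κ := by
    rw [← derivQuad A b₂ d₂ c, ← hq₂']; exact hd₂l
  -- points in [a,b]
  have hx₁ : c - Δ / 2 ∈ Set.Icc a b := hsub ⟨by linarith, by linarith⟩
  have hx₂ : c + Δ / 2 ∈ Set.Icc a b := hsub ⟨by linarith, by linarith⟩
  have hne : (c - Δ / 2) ≠ (c + Δ / 2) := by intro h; linarith [h]
  have hlipd := hlip _ hx₁ _ hx₂ hne
  have habs : |c - Δ / 2 - (c + Δ / 2)| = Δ := by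
    rw [abs_of_nonpos (by linarith)]; ring
  rw [habs, abs_lt] at hlipd
  obtain ⟨hl1, hl2⟩ := hlipd
  -- key value computations
  have hq₂x₁ : q₂ (c - Δ / 2) = f (c + Δ / 2) - 2 * κ * Δ := by
    have h1 := hq₂ (c - Δ / 2)
    have h2 := hq₂ (c + Δ / 2)
    rw [hmid₂] at h2
    linear_combination h1 - h2 - Δ * hb₂
  have hq₁x₂ : q₁ (c + Δ / 2) = f (c - Δ / 2) + 2 * κ * Δ + 2 * A * Δ ^ 2 := by
    have h1 := hq₁ (c + Δ / 2)
    have h2 := hq₁ (c - Δ / 2)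
    rw [hmid₁] at h2
    linear_combination h1 - h2 + Δ * hb₁
  have hAΔ2 : 2 * A * Δ ^ 2 = -(4 * κ) * Δ := by
    linear_combination (2 * Δ) * hAΔ
  have hbdiff : b₁ - b₂ = -(4 * κ) := by linarith [hAΔ, hb₁, hb₂]
  constructor
  · intro x hx
    have h1 := hq₁ x
    have h2 := hq₂ x
    have hg : q₁ x - q₂ x = (q₁ (c - Δ / 2) - q₂ (c - Δ / 2)) + (b₁ - b₂) * (x - (c - Δ / 2)) := by
      have h3 := hq₁ (c - Δ / 2)
      have h4 := hq₂ (c - Δ / 2)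
      linear_combination h1 - h2 - h3 + h4
    rw [hbdiff, hmid₁, hq₂x₁] at hg
    have hxle : x ≤ c - Δ / 2 := hx.2
    nlinarith [hg, hκ, hΔ]
  · intro x hx
    have h1 := hq₁ x
    have h2 := hq₂ x
    have hg : q₁ x - q₂ x = (q₁ (c + Δ / 2) - q₂ (c + Δ / 2)) + (b₁ - b₂) * (x - (c + Δ / 2)) := by
      have h3 := hq₁ (c + Δ / 2)
      have h4 := hq₂ (c + Δ / 2)
      linear_combination h1 - h2 - h3 + h4
    rw [hbdiff, hmid₂, hq₁x₂, hAΔ2] at hg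
    have hxge : c + Δ / 2 ≤ x := hx.1
    nlinarith [hg, hκ, hΔ]
end

section
/- If f : ℝ → ℝ is Lipschitz continuous on a compact interval [a,b], then for every ε > 0 there exist finitely many concave quadratic functions q₁,…,q_m such that max_{x∈[a,b]} |f(x) − maxᵢ qᵢ(x)| ≤ ε. -/
private lemma quad_aux (κ ε M u : ℝ) (hκ : 0 < κ) (hε : 0 < ε)
    (hMε : M * ε = κ ^ 2) (hu : 0 ≤ u) : κ * u - M * u ^ 2 ≤ ε := by
  have key : κ * u * ε - κ ^ 2 * u ^ 2 ≤ ε ^ 2 := by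
    nlinarith [sq_nonneg (κ * u - ε / 2)]
  have hMu : M * u ^ 2 * ε = κ ^ 2 * u ^ 2 := by rw [mul_right_comm, hMε]
  nlinarith

private lemma quad_aux2 (κ ε M h : ℝ) (hκ : 0 < κ) (hε : 0 < ε) (hh : 0 < h)
    (hMε : M * ε = κ ^ 2) (h2κ : 2 * κ * h ≤ ε) : κ * h + M * h ^ 2 ≤ ε := by
  have e1 : M * h ^ 2 * ε = κ ^ 2 * h ^ 2 := by rw [mul_right_comm, hMε]
  have e2 : (2 * κ * h) * (2 * κ * h) ≤ ε * ε :=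
    mul_le_mul h2κ h2κ (by positivity) hε.le
  nlinarith

/-- A function Lipschitz on a compact interval `[a,b]` can be approximated within any
`ε > 0` by a finite pointwise maximum of concave quadratic functions. -/
theorem stmt_14 (f : ℝ → ℝ) (a b κ : ℝ) (hab : a < b) (hκ : 0 < κ)
    (hlip : ∀ x ∈ Set.Icc a b, ∀ y ∈ Set.Icc a b, |f x - f y| ≤ κ * |x - y|)
    (ε : ℝ) (hε : 0 < ε) :
    ∃ (m : ℕ) (q : Fin (m + 1) → ℝ → ℝ),
      (∀ i, ∃ A B C : ℝ, A ≤ 0 ∧ ∀ x, q i x = A * x ^ 2 + B * x + C) ∧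
      ∀ x ∈ Set.Icc a b,
        |f x - Finset.univ.sup' Finset.univ_nonempty (fun i => q i x)| ≤ ε := by
  obtain ⟨M, hM0, hMε⟩ : ∃ M : ℝ, 0 < M ∧ M * ε = κ ^ 2 :=
    ⟨κ ^ 2 / ε, by positivity, by field_simp⟩
  obtain ⟨m, hm⟩ : ∃ m : ℕ, 2 * κ * (b - a) / ε ≤ (m : ℝ) := ⟨⌈_⌉₊, Nat.le_ceil _⟩
  set h : ℝ := (b - a) / ((m : ℝ) + 1) with hhdef
  have hh : 0 < h := div_pos (by linarith) (by positivity)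
  have hNh : ((m : ℝ) + 1) * h = b - a := by rw [hhdef]; field_simp
  have h2κ : 2 * κ * h ≤ ε := by
    have h1 : 2 * κ * (b - a) ≤ (m : ℝ) * ε := by
      rw [div_le_iff₀ hε] at hm; linarith
    have h2 : 2 * κ * (((m : ℝ) + 1) * h) ≤ ((m : ℝ) + 1) * ε := by
      rw [hNh]; nlinarith
    have h3 : (0 : ℝ) < (m : ℝ) + 1 := by positivity
    nlinarith
  -- grid points
  set p : Fin (m + 1) → ℝ := fun i => a + (i : ℝ) * h with hpdef
  have hpmem : ∀ i : Fin (m + 1), p i ∈ Set.Icc a b := by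
    intro i
    have h0 : (0 : ℝ) ≤ (i : ℝ) * h := by positivity
    have hi : (i : ℝ) ≤ (m : ℝ) := by exact_mod_cast Nat.lt_succ_iff.mp i.isLt
    have h1 : (i : ℝ) * h ≤ ((m : ℝ) + 1) * h := by nlinarith
    constructor
    · simp only [hpdef]; linarith
    · simp only [hpdef]; linarith [hNh]
  refine ⟨m, fun i x => f (p i) - M * (x - p i) ^ 2, ?_, ?_⟩
  · intro i
    exact ⟨-M, 2 * M * p i, f (p i) - M * (p i) ^ 2, by linarith, fun x => by ring⟩
  · intro x hx
    -- nearest grid point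
    obtain ⟨i, hi⟩ : ∃ i : Fin (m + 1), |x - p i| ≤ h := by
      set t : ℝ := (x - a) / h with htdef
      have hxt : x = a + t * h := by rw [htdef]; field_simp; ring
      have ht0 : 0 ≤ t := div_nonneg (by linarith [hx.1]) hh.le
      have htn : t ≤ (m : ℝ) + 1 := by
        rw [htdef, div_le_iff₀ hh]
        have := hx.2
        nlinarith [hNh]
      set k : ℕ := min ⌊t⌋₊ m with hkdef
      have hkm : k ≤ m := min_le_right _ _
      refine ⟨⟨k, Nat.lt_succ_of_le hkm⟩, ?_⟩
      have habs : |t - (k : ℝ)| ≤ 1 := by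
        rcases le_or_gt ⌊t⌋₊ m with hc | hc
        · have hk : k = ⌊t⌋₊ := min_eq_left hc
          rw [hk]
          have h1 : (⌊t⌋₊ : ℝ) ≤ t := Nat.floor_le ht0
          have h2 : t < (⌊t⌋₊ : ℝ) + 1 := Nat.lt_floor_add_one t
          rw [abs_le]; constructor <;> linarith
        · have hk : k = m := min_eq_right (le_of_lt hc)
          have h1 : ((m + 1 : ℕ) : ℝ) ≤ t := by
            apply (Nat.le_floor_iff ht0).mp
            omega
          push_cast at h1
          rw [hk, abs_le]; constructor <;> linarith
      have heq : x - p ⟨k, Nat.lt_succ_of_le hkm⟩ = (t - (k : ℝ)) * h := by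
        simp only [hpdef]
        rw [hxt]; ring
      rw [heq, abs_mul, abs_of_pos hh]
      nlinarith [abs_nonneg (t - (k : ℝ))]
    have hup : ∀ j : Fin (m + 1), f (p j) - M * (x - p j) ^ 2 ≤ f x + ε := by
      intro j
      have hl : |f (p j) - f x| ≤ κ * |p j - x| := hlip (p j) (hpmem j) x hx
      have h1 : f (p j) - f x ≤ κ * |p j - x| := (abs_le.mp hl).2
      have h2 : |p j - x| ^ 2 = (x - p j) ^ 2 := by rw [sq_abs]; ring
      have h3 : κ * |p j - x| - M * |p j - x| ^ 2 ≤ ε :=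
        quad_aux κ ε M _ hκ hε hMε (abs_nonneg _)
      rw [h2] at h3
      linarith
    have hdn : f x - ε ≤ f (p i) - M * (x - p i) ^ 2 := by
      have hl : |f x - f (p i)| ≤ κ * |x - p i| := hlip x hx (p i) (hpmem i)
      have h1 : f x - f (p i) ≤ κ * |x - p i| := (abs_le.mp hl).2
      have h2 : κ * |x - p i| ≤ κ * h := mul_le_mul_of_nonneg_left hi hκ.le
      have h3 : M * (x - p i) ^ 2 ≤ M * h ^ 2 := by
        apply mul_le_mul_of_nonneg_left _ hM0.le
        rw [← sq_abs]
        exact pow_le_pow_left₀ (abs_nonneg _) hi 2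
      have h4 : κ * h + M * h ^ 2 ≤ ε := quad_aux2 κ ε M h hκ hε hh hMε h2κ
      linarith
    have hle : f (p i) - M * (x - p i) ^ 2 ≤
        Finset.univ.sup' Finset.univ_nonempty
          (fun j : Fin (m + 1) => f (p j) - M * (x - p j) ^ 2) :=
      Finset.le_sup' (fun j : Fin (m + 1) => f (p j) - M * (x - p j) ^ 2) (Finset.mem_univ i)
    have hge : Finset.univ.sup' Finset.univ_nonempty
        (fun j : Fin (m + 1) => f (p j) - M * (x - p j) ^ 2) ≤ f x + ε :=
      Finset.sup'_le _ _ (fun j _ => hup j)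
    rw [abs_sub_le_iff]
    exact ⟨by linarith, by linarith⟩
end

section
/- Let f : ℝⁿ → ℝ be separable, f(x) = Σⱼ fⱼ(xⱼ), with each fⱼ Lipschitz on [aⱼ, bⱼ]. Then for every ε > 0 there exist finitely many concave functions p₁,…,p_m : ℝⁿ → ℝ such that |f(x) − maxᵢ pᵢ(x)| ≤ ε for all x in the box Πⱼ [aⱼ, bⱼ]. -/
lemma aux_concave (n : ℕ) (κ : Fin n → ℝ) (hκ : ∀ j, 0 ≤ κ j) (c : Fin n → ℝ) (C : ℝ) :
    ConcaveOn ℝ Set.univ (fun x : Fin n → ℝ => C - ∑ j, κ j * |x j - c j|) := by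
  refine ⟨convex_univ, ?_⟩
  intro x _ y _ a b ha hb hab
  simp only [smul_eq_mul, Pi.add_apply, Pi.smul_apply]
  have key : ∑ j, κ j * |a * x j + b * y j - c j| ≤
      a * (∑ j, κ j * |x j - c j|) + b * (∑ j, κ j * |y j - c j|) := by
    rw [Finset.mul_sum, Finset.mul_sum, ← Finset.sum_add_distrib]
    apply Finset.sum_le_sum
    intro j _
    have h1 : a * x j + b * y j - c j = a * (x j - c j) + b * (y j - c j) := by
      linear_combination (c j) * hab
    rw [h1]
    have h2 : |a * (x j - c j) + b * (y j - c j)| ≤ a * |x j - c j| + b * |y j - c j| := by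
      calc |a * (x j - c j) + b * (y j - c j)| ≤ |a * (x j - c j)| + |b * (y j - c j)| :=
            abs_add_le _ _
        _ = a * |x j - c j| + b * |y j - c j| := by
            rw [abs_mul, abs_mul, abs_of_nonneg ha, abs_of_nonneg hb]
    nlinarith [hκ j, abs_nonneg (x j - c j), abs_nonneg (y j - c j)]
  have hC : a * C + b * C = C := by rw [← add_mul, hab, one_mul]
  linarith [key]

/-- Piecewise-concave approximation of separable Lipschitz functions: if
`f x = Σⱼ fⱼ(xⱼ)` with each `fⱼ` Lipschitz on `[aⱼ, bⱼ]`, then for every `ε > 0` there are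
finitely many concave functions whose pointwise maximum approximates `f` within `ε` on the box. -/
theorem stmt_17 (n : ℕ) (hn : 1 ≤ n) (f : Fin n → ℝ → ℝ) (A B κ : Fin n → ℝ)
    (hκ : ∀ j, 0 < κ j)
    (hlip : ∀ j, ∀ x ∈ Set.Icc (A j) (B j), ∀ y ∈ Set.Icc (A j) (B j),
      |f j x - f j y| ≤ κ j * |x - y|)
    (ε : ℝ) (hε : 0 < ε) :
    ∃ (m : ℕ) (p : Fin (m + 1) → (Fin n → ℝ) → ℝ),
      (∀ i, ConcaveOn ℝ Set.univ (p i)) ∧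
      ∀ x : Fin n → ℝ, (∀ j, x j ∈ Set.Icc (A j) (B j)) →
        |(∑ j, f j (x j)) - Finset.univ.sup' Finset.univ_nonempty (fun i => p i x)| ≤ ε := by
  classical
  set S : Set (Fin n → ℝ) := Set.pi Set.univ (fun j => Set.Icc (A j) (B j)) with hS
  have hmemS : ∀ x : Fin n → ℝ, x ∈ S ↔ ∀ j, x j ∈ Set.Icc (A j) (B j) := by
    intro x; simp [hS, Set.mem_pi, Set.mem_Icc, Pi.le_def, forall_and]
  by_cases hne : S.Nonempty
  · -- compactness argument
    have hcomp : IsCompact S := isCompact_univ_pi (fun j => isCompact_Icc)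
    -- the weighted ℓ¹ distance from y
    set g : (Fin n → ℝ) → (Fin n → ℝ) → ℝ := fun y x => ∑ j, κ j * |x j - y j| with hg
    have hgcont : ∀ y : Fin n → ℝ, Continuous (g y) := by
      intro y
      apply continuous_finset_sum
      intro j _
      exact (continuous_const.mul (((continuous_apply j).sub continuous_const).abs))
    set U : S → Set (Fin n → ℝ) := fun y => {x | g y.1 x < ε / 2} with hU
    have hUopen : ∀ y : S, IsOpen (U y) := fun y =>
      isOpen_lt (hgcont y.1) continuous_const
    have hcover : S ⊆ ⋃ y : S, U y := by
      intro x hx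
      refine Set.mem_iUnion.mpr ⟨⟨x, hx⟩, ?_⟩
      simp only [hU, Set.mem_setOf_eq, hg]
      have : ∑ j, κ j * |x j - x j| = 0 := by simp
      rw [this]; positivity
    obtain ⟨t, ht⟩ := hcomp.elim_finite_subcover U hUopen hcover
    have htne : t.Nonempty := by
      obtain ⟨x0, hx0⟩ := hne
      have := ht hx0
      rw [Set.mem_iUnion₂] at this
      obtain ⟨y, hy, _⟩ := this
      exact ⟨y, hy⟩
    have hcard : t.card - 1 + 1 = t.card := Nat.succ_pred_eq_of_pos (Finset.card_pos.mpr htne)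
    refine ⟨t.card - 1, ?_, ?_, ?_⟩
    · -- the functions
      exact fun i x =>
        (∑ j, f j (((t.equivFin.symm (Fin.cast hcard i)) : S).1 j)) -
          ∑ j, κ j * |x j - ((t.equivFin.symm (Fin.cast hcard i)) : S).1 j|
    · intro i
      exact aux_concave n κ (fun j => (hκ j).le) _ _
    · intro x hx
      set yfun : Fin (t.card - 1 + 1) → (Fin n → ℝ) :=
        fun i => ((t.equivFin.symm (Fin.cast hcard i)) : S).1 with hyfun
      have hyS : ∀ i, yfun i ∈ S := fun i => ((t.equivFin.symm (Fin.cast hcard i)) : S).2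
      -- upper bound: each p i x ≤ f x
      have hupper : ∀ i, (∑ j, f j (yfun i j)) - ∑ j, κ j * |x j - yfun i j| ≤
          ∑ j, f j (x j) := by
        intro i
        have : ∀ j, f j (yfun i j) - κ j * |x j - yfun i j| ≤ f j (x j) := by
          intro j
          have h1 := hlip j (yfun i j) ((hmemS _).mp (hyS i) j) (x j) (hx j)
          have h2 : f j (yfun i j) - f j (x j) ≤ |f j (yfun i j) - f j (x j)| := le_abs_self _
          have h3 : |yfun i j - x j| = |x j - yfun i j| := abs_sub_comm _ _
          rw [h3] at h1
          linarith
        calc (∑ j, f j (yfun i j)) - ∑ j, κ j * |x j - yfun i j|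
            = ∑ j, (f j (yfun i j) - κ j * |x j - yfun i j|) := by
              rw [Finset.sum_sub_distrib]
          _ ≤ ∑ j, f j (x j) := Finset.sum_le_sum (fun j _ => this j)
      -- lower bound: some p i x ≥ f x - ε
      have hxS : x ∈ S := (hmemS x).mpr hx
      have := ht hxS
      rw [Set.mem_iUnion₂] at this
      obtain ⟨y, hyt, hygood⟩ := this
      set i0 : Fin (t.card - 1 + 1) := Fin.cast hcard.symm (t.equivFin ⟨y, hyt⟩) with hi0
      have hyi0 : yfun i0 = y.1 := by
        simp [hyfun, hi0, Fin.cast_cast]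
      have hglt : ∑ j, κ j * |x j - y.1 j| < ε / 2 := hygood
      have hlower : (∑ j, f j (x j)) - ε ≤
          (∑ j, f j (yfun i0 j)) - ∑ j, κ j * |x j - yfun i0 j| := by
        rw [hyi0]
        have : ∀ j, f j (x j) - f j (y.1 j) ≤ κ j * |x j - y.1 j| := by
          intro j
          have h1 := hlip j (x j) (hx j) (y.1 j) ((hmemS _).mp y.2 j)
          have h2 : f j (x j) - f j (y.1 j) ≤ |f j (x j) - f j (y.1 j)| := le_abs_self _
          linarith
        have hsum : (∑ j, f j (x j)) - (∑ j, f j (y.1 j)) ≤ ∑ j, κ j * |x j - y.1 j| := by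
          rw [← Finset.sum_sub_distrib]
          exact Finset.sum_le_sum (fun j _ => this j)
        linarith
      -- combine
      have hsup_le : Finset.univ.sup' Finset.univ_nonempty
          (fun i => (∑ j, f j (yfun i j)) - ∑ j, κ j * |x j - yfun i j|) ≤
          ∑ j, f j (x j) :=
        Finset.sup'_le _ _ (fun i _ => hupper i)
      have hle_sup : (∑ j, f j (yfun i0 j)) - ∑ j, κ j * |x j - yfun i0 j| ≤
          Finset.univ.sup' Finset.univ_nonempty
          (fun i => (∑ j, f j (yfun i j)) - ∑ j, κ j * |x j - yfun i j|) :=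
        Finset.le_sup' (fun i => (∑ j, f j (yfun i j)) - ∑ j, κ j * |x j - yfun i j|) (Finset.mem_univ i0)
      rw [abs_le]
      constructor <;> [linarith; linarith]
  · -- empty box
    refine ⟨0, fun _ _ => 0, fun i => concaveOn_const 0 convex_univ, ?_⟩
    intro x hx
    exact absurd ((hmemS x).mpr hx) (fun h => hne ⟨x, h⟩)
end
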